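/- arXiv:2007.07079 — 8 statements merged into one kernel-verified Lean document; each statement's English description precedes it below -/
import Mathlib

section
/- For f(x) = 1/log₂(x+1) and any even integer d ≥ 2, the sum ∑_{j=1}^{d/2} (f(j) − f(j + d/2)) is at least d / (16 · log₂²(d)). -/
theorem stmt_0 (d : ℕ) (hd : 2 ≤ d) (hev : Even d) :
    (∑ j ∈ Finset.Icc 1 (d / 2),
        (1 / Real.logb 2 ((j : ℝ) + 1) - 1 / Real.logb 2 ((j : ℝ) + (d / 2 : ℕ) + 1)))
      ≥ (d : ℝ) / (16 * (Real.logb 2 d) ^ 2) := by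
  obtain ⟨m, hm⟩ := hev
  have hmd : d = 2 * m := by omega
  subst hmd
  have hm1 : 1 ≤ m := by omega
  have hdiv : 2 * m / 2 = m := by omega
  rw [hdiv]
  have hmR : (1 : ℝ) ≤ (m : ℝ) := by exact_mod_cast hm1
  set L : ℝ := Real.logb 2 (2 * (m : ℝ) + 1) with hLdef
  have hLpos : 0 < L := Real.logb_pos (by norm_num) (by linarith)
  -- per-term bound
  have hterm : ∀ j ∈ Finset.Icc 1 m,
      (1 / 2) / L ^ 2 ≤
        1 / Real.logb 2 ((j : ℝ) + 1) - 1 / Real.logb 2 ((j : ℝ) + (m : ℕ) + 1) := by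
    intro j hj
    simp only [Finset.mem_Icc] at hj
    obtain ⟨hj1, hj2⟩ := hj
    have hjR1 : (1 : ℝ) ≤ (j : ℝ) := by exact_mod_cast hj1
    have hjR2 : (j : ℝ) ≤ (m : ℝ) := by exact_mod_cast hj2
    set a : ℝ := Real.logb 2 ((j : ℝ) + 1) with hadef
    set b : ℝ := Real.logb 2 ((j : ℝ) + (m : ℕ) + 1) with hbdef
    have hxpos : (0 : ℝ) < (j : ℝ) + 1 := by linarith
    have hypos : (0 : ℝ) < (j : ℝ) + (m : ℕ) + 1 := by push_cast; linarith
    have ha : 0 < a := Real.logb_pos (by norm_num) (by linarith)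
    have hb : 0 < b := Real.logb_pos (by norm_num) (by push_cast; linarith)
    have haL : a ≤ L := by
      rw [hadef, hLdef, Real.logb_le_logb (by norm_num) hxpos (by linarith)]
      linarith
    have hbL : b ≤ L := by
      rw [hbdef, hLdef, Real.logb_le_logb (by norm_num) hypos (by linarith)]
      push_cast
      linarith
    have hba : (1 / 2 : ℝ) ≤ b - a := by
      have hdiveq : b - a = Real.logb 2 (((j : ℝ) + (m : ℕ) + 1) / ((j : ℝ) + 1)) := by
        rw [Real.logb_div (by linarith) (by linarith)]
      have hratio : (3 / 2 : ℝ) ≤ ((j : ℝ) + (m : ℕ) + 1) / ((j : ℝ) + 1) := by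
        rw [le_div_iff₀ hxpos]
        push_cast
        linarith
      have hsqrt : (2 : ℝ) ^ ((1 : ℝ) / 2) ≤ ((j : ℝ) + (m : ℕ) + 1) / ((j : ℝ) + 1) := by
        have h2 : (2 : ℝ) ^ ((1 : ℝ) / 2) = Real.sqrt 2 := by
          rw [Real.sqrt_eq_rpow]
        rw [h2]
        nlinarith [Real.sq_sqrt (by norm_num : (0:ℝ) ≤ 2), Real.sqrt_nonneg 2]
      rw [hdiveq]
      exact (Real.le_logb_iff_rpow_le (by norm_num) (by positivity)).mpr hsqrt
    have hkey : 1 / a - 1 / b = (b - a) / (a * b) := by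
      field_simp
    rw [hkey]
    exact div_le_div₀ (by linarith) hba (by positivity)
      (by nlinarith)
  have hsum := Finset.card_nsmul_le_sum (Finset.Icc 1 m)
      (fun j => 1 / Real.logb 2 ((j : ℝ) + 1) - 1 / Real.logb 2 ((j : ℝ) + (m : ℕ) + 1))
      ((1 / 2) / L ^ 2) hterm
  rw [Nat.card_Icc, nsmul_eq_mul] at hsum
  have hcard : ((m + 1 - 1 : ℕ) : ℝ) = (m : ℝ) := by
    norm_num
  rw [hcard] at hsum
  -- final arithmetic
  set lg : ℝ := Real.logb 2 ((2 * m : ℕ) : ℝ) with hlgdef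
  have hlgpos : 0 < lg := by
    apply Real.logb_pos (by norm_num)
    push_cast; linarith
  have hLlg : L ≤ 2 * lg := by
    have h1 : L ≤ Real.logb 2 (((2 * m : ℕ) : ℝ) ^ 2) := by
      rw [hLdef, Real.logb_le_logb (by norm_num) (by linarith) (by push_cast; positivity)]
      push_cast
      nlinarith
    rw [Real.logb_pow] at h1
    push_cast at h1
    have hlg' : lg = Real.logb 2 (2 * (m : ℝ)) := by rw [hlgdef]; norm_cast
    linarith
  refine le_trans ?_ hsum
  have hL2 : L ^ 2 ≤ 4 * lg ^ 2 := by nlinarith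
  have hrhs : (m : ℝ) * (1 / 2 / L ^ 2) = (m : ℝ) / (2 * L ^ 2) := by ring
  rw [hrhs, div_le_div_iff₀ (by positivity) (by positivity)]
  push_cast
  nlinarith [mul_le_mul_of_nonneg_left hL2 (by linarith : (0:ℝ) ≤ (m:ℝ))]
end

section
/- For f(x) = 1/log₂(x+1) and any integer d ≥ 4 that is divisible by 4, the sum ∑_{j=d/4}^{d/2} (f(j) − f(j + d/4 + 1)) is at least d / (32 · log₂²(d)). -/
theorem stmt_1 (d : ℕ) (hd : 4 ≤ d) (h4 : 4 ∣ d) :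
    (∑ j ∈ Finset.Icc (d / 4) (d / 2),
        (1 / Real.logb 2 ((j : ℝ) + 1) - 1 / Real.logb 2 ((j : ℝ) + (d / 4 : ℕ) + 1 + 1)))
      ≥ (d : ℝ) / (32 * (Real.logb 2 d) ^ 2) := by
  obtain ⟨k, rfl⟩ := h4
  have hk : 1 ≤ k := by omega
  have h14 : 4 * k / 4 = k := by omega
  have h12 : 4 * k / 2 = 2 * k := by omega
  rw [h14, h12]
  have hkR : (1:ℝ) ≤ (k:ℝ) := by exact_mod_cast hk
  set L := Real.logb 2 ((4 * k : ℕ) : ℝ) with hL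
  have hdR : ((4 * k : ℕ) : ℝ) = 4 * (k:ℝ) := by push_cast; ring
  have hL2 : 2 ≤ L := by
    rw [hL, hdR]
    calc (2:ℝ) = Real.logb 2 ((2:ℝ)^2) := by
          rw [Real.logb_pow, Real.logb_self_eq_one (by norm_num : (1:ℝ) < 2)]; norm_num
      _ ≤ Real.logb 2 (4 * (k:ℝ)) :=
          Real.logb_le_logb_of_le (by norm_num) (by norm_num) (by nlinarith)
  have hLpos : 0 < L := by linarith
  have h32 : (1:ℝ)/2 ≤ Real.logb 2 (3/2) := by
    have h1 : Real.log 2 ≤ Real.log (9/4) :=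
      Real.log_le_log (by norm_num) (by norm_num)
    have h94 : Real.log (9/4) = 2 * Real.log (3/2) := by
      rw [show (9:ℝ)/4 = (3/2)^2 by norm_num, Real.log_pow]; push_cast; ring
    rw [Real.logb, le_div_iff₀ (Real.log_pos one_lt_two)]
    linarith
  have key : ∀ j ∈ Finset.Icc k (2 * k),
      1 / (4 * L ^ 2) ≤
        1 / Real.logb 2 ((j : ℝ) + 1) - 1 / Real.logb 2 ((j : ℝ) + (k:ℕ) + 1 + 1) := by
    intro j hj
    rw [Finset.mem_Icc] at hj
    have hjk : (k : ℝ) ≤ (j:ℝ) := by exact_mod_cast hj.1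
    have hj2k : (j : ℝ) ≤ 2 * (k:ℝ) := by exact_mod_cast hj.2
    set a := Real.logb 2 ((j : ℝ) + 1) with haDef
    set b := Real.logb 2 ((j : ℝ) + (k:ℕ) + 1 + 1) with hbDef
    have ha1 : 1 ≤ a := by
      rw [haDef]
      calc (1:ℝ) = Real.logb 2 2 := (Real.logb_self_eq_one (by norm_num : (1:ℝ) < 2)).symm
        _ ≤ _ := Real.logb_le_logb_of_le (by norm_num) (by norm_num) (by linarith)
    have haL : a ≤ L := by
      rw [haDef, hL, hdR]
      exact Real.logb_le_logb_of_le (by norm_num) (by linarith) (by linarith)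
    have hb2L : b ≤ 2 * L := by
      rw [hbDef, hL, hdR]
      calc Real.logb 2 ((j:ℝ) + (k:ℕ) + 1 + 1) ≤ Real.logb 2 ((4 * (k:ℝ))^2) :=
            Real.logb_le_logb_of_le (by norm_num) (by linarith) (by nlinarith)
        _ = 2 * Real.logb 2 (4 * (k:ℝ)) := by rw [Real.logb_pow]; push_cast; ring
    have hab : a + 1/2 ≤ b := by
      have hcmp : (3/2 : ℝ) * ((j:ℝ) + 1) ≤ (j:ℝ) + (k:ℕ) + 1 + 1 := by nlinarith
      have hmono : Real.logb 2 ((3/2 : ℝ) * ((j:ℝ) + 1)) ≤ b := by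
        rw [hbDef]
        exact Real.logb_le_logb_of_le (by norm_num) (by nlinarith) hcmp
      rw [Real.logb_mul (by norm_num) (by positivity)] at hmono
      rw [haDef]; linarith
    have hbpos : 0 < b := by linarith
    have hapos : 0 < a := by linarith
    have hsub : 1 / a - 1 / b = (b - a) / (a * b) := by
      field_simp
    rw [hsub]
    calc 1 / (4 * L ^ 2) = (1/2) / (2 * L ^ 2) := by ring
      _ ≤ (b - a) / (a * b) := by
          apply div_le_div₀ (by linarith) (by linarith) (by positivity)
          nlinarith
  have hsum := Finset.card_nsmul_le_sum (Finset.Icc k (2 * k)) _ _ key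
  rw [Nat.card_Icc] at hsum
  have hcard : 2 * k + 1 - k = k + 1 := by omega
  rw [hcard, nsmul_eq_mul] at hsum
  rw [ge_iff_le, hdR]
  calc 4 * (k:ℝ) / (32 * L ^ 2) ≤ ((k:ℕ) + 1 : ℝ) * (1 / (4 * L ^ 2)) := by
        have heq : ((k:ℕ) + 1 : ℝ) * (1 / (4 * L ^ 2)) = ((k:ℝ) + 1) / (4 * L ^ 2) := by
          push_cast; ring
        rw [heq, div_le_div_iff₀ (by positivity) (by positivity)]
        nlinarith [sq_nonneg L]
    _ ≤ _ := by exact_mod_cast hsum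
end

section
/- Let d be divisible by 4 with d ≥ 4. If a permutation π of {1,...,d} is chosen uniformly at random, then the probability that fewer than d/4 of the elements {1,...,d/2} are mapped by π into the set of positions {1,...,d/2} is at least 1/6. -/
private lemma card_filter_lt (d n : ℕ) (hn : n ≤ d) :
    (Finset.univ.filter fun k : Fin d => k.val < n).card = n := by
  have h : (Finset.univ.filter fun k : Fin d => k.val < n) =
      (Finset.range n).attachFin (fun x hx => lt_of_lt_of_le (Finset.mem_range.mp hx) hn) := by
    ext k
    simp [Finset.mem_attachFin]
  rw [h, Finset.card_attachFin, Finset.card_range]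

private lemma perm_filter_card {d : ℕ} (π : Equiv.Perm (Fin d)) (p : Fin d → Prop)
    [DecidablePred p] :
    (Finset.univ.filter fun k => p (π k)).card = (Finset.univ.filter p).card := by
  apply Finset.card_bij' (fun k _ => π k) (fun k _ => π.symm k) <;>
    intro a ha <;> simp_all

private lemma split_card {α : Type*} [Fintype α] (p q : α → Prop)
    [DecidablePred p] [DecidablePred q] :
    (Finset.univ.filter fun k => q k ∧ p k).card +
      (Finset.univ.filter fun k => ¬ q k ∧ p k).card
      = (Finset.univ.filter p).card := by
  classical
  rw [← Finset.card_filter_add_card_filter_not (s := Finset.univ.filter p) (p := q)]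
  rw [Finset.filter_filter, Finset.filter_filter]
  congr 1 <;> (congr 1; apply Finset.filter_congr; intro x _; tauto)

private def XC (m : ℕ) (π : Equiv.Perm (Fin (4*m))) : ℕ :=
  (Finset.univ.filter fun j : Fin (4*m) => j.val < 2*m ∧ (π j).val < 2*m).card

private def BC (m : ℕ) (π : Equiv.Perm (Fin (4*m))) : ℕ :=
  (Finset.univ.filter fun j : Fin (4*m) => j.val < 2*m ∧ ¬ (π j).val < 2*m).card

private def CC (m : ℕ) (π : Equiv.Perm (Fin (4*m))) : ℕ :=
  (Finset.univ.filter fun j : Fin (4*m) => ¬ j.val < 2*m ∧ (π j).val < 2*m).card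

private def EC (m : ℕ) (π : Equiv.Perm (Fin (4*m))) : ℕ :=
  (Finset.univ.filter fun j : Fin (4*m) => ¬ j.val < 2*m ∧ ¬ (π j).val < 2*m).card

private lemma hXC_CC (m : ℕ) (π : Equiv.Perm (Fin (4*m))) : XC m π + CC m π = 2*m := by
  have h := split_card (fun j : Fin (4*m) => (π j).val < 2*m) (fun j => j.val < 2*m)
  rw [perm_filter_card π (fun j => j.val < 2*m), card_filter_lt _ _ (by omega)] at h
  exact h

private lemma hXC_BC (m : ℕ) (π : Equiv.Perm (Fin (4*m))) : XC m π + BC m π = 2*m := by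
  have h := split_card (fun j : Fin (4*m) => j.val < 2*m) (fun j => (π j).val < 2*m)
  rw [card_filter_lt _ _ (by omega)] at h
  rw [show (Finset.univ.filter fun j : Fin (4*m) => (π j).val < 2*m ∧ j.val < 2*m)
      = Finset.univ.filter fun j : Fin (4*m) => j.val < 2*m ∧ (π j).val < 2*m by
    apply Finset.filter_congr; intro x _; tauto] at h
  rw [show (Finset.univ.filter fun j : Fin (4*m) => ¬ (π j).val < 2*m ∧ j.val < 2*m)
      = Finset.univ.filter fun j : Fin (4*m) => j.val < 2*m ∧ ¬ (π j).val < 2*m by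
    apply Finset.filter_congr; intro x _; tauto] at h
  exact h

private lemma hBC_EC (m : ℕ) (π : Equiv.Perm (Fin (4*m))) : BC m π + EC m π = 2*m := by
  have h := split_card (fun j : Fin (4*m) => ¬ (π j).val < 2*m) (fun j => j.val < 2*m)
  have h2 : (Finset.univ.filter fun j : Fin (4*m) => (π j).val < 2*m).card +
      (Finset.univ.filter fun j : Fin (4*m) => ¬ (π j).val < 2*m).card = 4*m := by
    rw [Finset.card_filter_add_card_filter_not]
    simp
  rw [perm_filter_card π (fun j => j.val < 2*m), card_filter_lt _ _ (by omega)] at h2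
  have h3 : (Finset.univ.filter fun j : Fin (4*m) => ¬ (π j).val < 2*m).card = 2*m := by omega
  rw [h3] at h
  exact h

theorem stmt_2 (d : ℕ) (hd : 4 ≤ d) (h4 : 4 ∣ d) :
    ((Finset.univ.filter (fun π : Equiv.Perm (Fin d) =>
        (Finset.univ.filter (fun j : Fin d => j.val < d / 2 ∧ (π j).val < d / 2)).card < d / 4)).card : ℝ)
      / (Nat.factorial d) ≥ 1 / 6 := by
  obtain ⟨m, rfl⟩ := h4
  have hm : 1 ≤ m := by omega
  simp only [show 4*m/2 = 2*m by omega, show 4*m/4 = m by omega]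
  show ((Finset.univ.filter (fun π : Equiv.Perm (Fin (4*m)) => XC m π < m)).card : ℝ)
      / (Nat.factorial (4*m)) ≥ 1 / 6
  -- the "swap halves" permutation
  have hval : ∀ k : ℕ, k < 4*m → (k + 2*m) % (4*m) = if k < 2*m then k + 2*m else k - 2*m := by
    intro k hk
    split
    · exact Nat.mod_eq_of_lt (by omega)
    · have e : k + 2*m - 4*m = k - 2*m := by omega
      rw [Nat.mod_eq_sub_mod (by omega), e]
      exact Nat.mod_eq_of_lt (by omega)
  set f : Fin (4*m) → Fin (4*m) :=
    fun k => ⟨(k.val + 2*m) % (4*m), Nat.mod_lt _ (by omega)⟩ with hfdef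
  have hfval : ∀ k : Fin (4*m), (f k).val = if k.val < 2*m then k.val + 2*m else k.val - 2*m :=
    fun k => hval k.val k.isLt
  have hff : ∀ k, f (f k) = k := by
    intro k
    have hk := k.isLt
    apply Fin.ext
    rw [hfval (f k), hfval k]
    split_ifs <;> omega
  have hflip : ∀ k : Fin (4*m), ((f k).val < 2*m ↔ ¬ k.val < 2*m) := by
    intro k
    have hk := k.isLt
    rw [hfval k]
    split_ifs <;> omega
  set ρ : Equiv.Perm (Fin (4*m)) := ⟨f, f, hff, hff⟩ with hρdef
  have hρ : ∀ k, ρ k = f k := fun _ => rfl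
  -- symmetry : XC of ρ.trans π equals CC of π
  have Hsym : ∀ π : Equiv.Perm (Fin (4*m)), XC m (ρ.trans π) = CC m π := by
    intro π
    apply Finset.card_bij' (fun j _ => f j) (fun k _ => f k)
    · intro a ha
      simp only [Finset.mem_filter, Finset.mem_univ, true_and, Equiv.trans_apply, hρ] at ha ⊢
      exact ⟨fun h => (hflip a).mp h ha.1, ha.2⟩
    · intro a ha
      simp only [Finset.mem_filter, Finset.mem_univ, true_and, Equiv.trans_apply, hρ] at ha ⊢
      refine ⟨(hflip a).mpr ha.1, ?_⟩
      rw [hff a]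
      exact ha.2
    · intro a _; exact hff a
    · intro a _; exact hff a
  -- #{XC > m} = #{XC < m}
  have Hcard_sym : (Finset.univ.filter fun π : Equiv.Perm (Fin (4*m)) => m < XC m π).card
      = (Finset.univ.filter fun π : Equiv.Perm (Fin (4*m)) => XC m π < m).card := by
    have hinv : ∀ π : Equiv.Perm (Fin (4*m)), ρ.trans (ρ.trans π) = π := by
      intro π
      ext x
      simp only [Equiv.trans_apply, hρ, hff]
    apply Finset.card_bij' (fun π _ => ρ.trans π) (fun π _ => ρ.trans π)
    · intro π hπ
      simp only [Finset.mem_filter, Finset.mem_univ, true_and] at hπ ⊢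
      have h1 := hXC_CC m π
      rw [Hsym]
      omega
    · intro π hπ
      simp only [Finset.mem_filter, Finset.mem_univ, true_and] at hπ ⊢
      have h1 := hXC_CC m π
      rw [Hsym]
      omega
    · intro π _; exact hinv π
    · intro π _; exact hinv π
  -- trichotomy
  have Htri : (Finset.univ.filter fun π : Equiv.Perm (Fin (4*m)) => XC m π < m).card
      + (Finset.univ.filter fun π : Equiv.Perm (Fin (4*m)) => XC m π = m).card
      + (Finset.univ.filter fun π : Equiv.Perm (Fin (4*m)) => m < XC m π).card
      = Nat.factorial (4*m) := by
    have h1 := Finset.card_filter_add_card_filter_not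
      (s := (Finset.univ : Finset (Equiv.Perm (Fin (4*m))))) (p := fun π => XC m π < m)
    have h2 := split_card (fun π : Equiv.Perm (Fin (4*m)) => ¬ XC m π < m)
      (fun π => XC m π = m)
    rw [show (Finset.univ.filter fun π : Equiv.Perm (Fin (4*m)) => XC m π = m ∧ ¬ XC m π < m)
        = Finset.univ.filter fun π : Equiv.Perm (Fin (4*m)) => XC m π = m from
      Finset.filter_congr (by intro x _; omega)] at h2
    rw [show (Finset.univ.filter fun π : Equiv.Perm (Fin (4*m)) => ¬ XC m π = m ∧ ¬ XC m π < m)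
        = Finset.univ.filter fun π : Equiv.Perm (Fin (4*m)) => m < XC m π from
      Finset.filter_congr (by intro x _; omega)] at h2
    have h3 : (Finset.univ : Finset (Equiv.Perm (Fin (4*m)))).card = Nat.factorial (4*m) := by
      simp [Fintype.card_perm]
    omega
  -- double counting : #{XC = m} ≤ 4 * #{XC < m}
  have Hmain : (Finset.univ.filter fun π : Equiv.Perm (Fin (4*m)) => XC m π = m).card
      ≤ 4 * (Finset.univ.filter fun π : Equiv.Perm (Fin (4*m)) => XC m π < m).card := by
    set Sm : Finset (Σ _ : Equiv.Perm (Fin (4*m)), Fin (4*m) × Fin (4*m)) :=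
      (Finset.univ.filter fun π : Equiv.Perm (Fin (4*m)) => XC m π = m).sigma
        (fun π => (Finset.univ.filter fun j : Fin (4*m) => j.val < 2*m ∧ (π j).val < 2*m) ×ˢ
              (Finset.univ.filter fun k : Fin (4*m) => ¬ k.val < 2*m ∧ ¬ (π k).val < 2*m))
      with hSmdef
    set Sm' : Finset (Σ _ : Equiv.Perm (Fin (4*m)), Fin (4*m) × Fin (4*m)) :=
      (Finset.univ.filter fun π : Equiv.Perm (Fin (4*m)) => XC m π + 1 = m).sigma
        (fun π => (Finset.univ.filter fun j : Fin (4*m) => j.val < 2*m ∧ ¬ (π j).val < 2*m) ×ˢ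
              (Finset.univ.filter fun k : Fin (4*m) => ¬ k.val < 2*m ∧ (π k).val < 2*m))
      with hSm'def
    have hSmcard : Sm.card
        = (Finset.univ.filter fun π : Equiv.Perm (Fin (4*m)) => XC m π = m).card * (m * m) := by
      rw [hSmdef, Finset.card_sigma]
      rw [Finset.sum_congr rfl (fun π hπ => ?_), Finset.sum_const, smul_eq_mul]
      rw [Finset.card_product]
      simp only [Finset.mem_filter, Finset.mem_univ, true_and] at hπ
      have h1 := hXC_CC m π
      have h2 := hXC_BC m π
      have h3 := hBC_EC m π
      have e1 : (Finset.univ.filter fun j : Fin (4*m) => j.val < 2*m ∧ (π j).val < 2*m).card = m := hπ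
      have e2 : (Finset.univ.filter fun k : Fin (4*m) => ¬ k.val < 2*m ∧ ¬ (π k).val < 2*m).card = m := by
        unfold XC BC CC EC at *
        omega
      rw [e1, e2]
    have hSm'card : Sm'.card
        = (Finset.univ.filter fun π : Equiv.Perm (Fin (4*m)) => XC m π + 1 = m).card
          * ((m+1) * (m+1)) := by
      rw [hSm'def, Finset.card_sigma]
      rw [Finset.sum_congr rfl (fun π hπ => ?_), Finset.sum_const, smul_eq_mul]
      rw [Finset.card_product]
      simp only [Finset.mem_filter, Finset.mem_univ, true_and] at hπ
      have h1 := hXC_CC m π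
      have h2 := hXC_BC m π
      have h3 := hBC_EC m π
      have e1 : (Finset.univ.filter fun j : Fin (4*m) => j.val < 2*m ∧ ¬ (π j).val < 2*m).card = m+1 := by
        unfold XC BC CC EC at *
        omega
      have e2 : (Finset.univ.filter fun k : Fin (4*m) => ¬ k.val < 2*m ∧ (π k).val < 2*m).card = m+1 := by
        unfold XC BC CC EC at *
        omega
      rw [e1, e2]
    have hinj : Sm.card ≤ Sm'.card := by
      apply Finset.card_le_card_of_injOn
        (fun x => ⟨(Equiv.swap x.2.1 x.2.2).trans x.1, x.2⟩)
      · rintro ⟨π, j, k⟩ hx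
        simp only [hSmdef, hSm'def, Finset.mem_coe, Finset.mem_sigma, Finset.mem_filter, Finset.mem_univ,
          true_and, Finset.mem_product] at hx ⊢
        obtain ⟨hπ, ⟨hj1, hj2⟩, hk1, hk2⟩ := hx
        have hjk : j ≠ k := by
          intro h
          rw [h] at hj1
          exact hk1 hj1
        have hσj : ((Equiv.swap j k).trans π) j = π k := by
          simp [Equiv.trans_apply]
        have hσk : ((Equiv.swap j k).trans π) k = π j := by
          simp [Equiv.trans_apply]
        refine ⟨?_, ⟨hj1, by rw [hσj]; exact hk2⟩, hk1, by rw [hσk]; exact hj2⟩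
        -- XC of the swapped permutation
        have hset : (Finset.univ.filter fun i : Fin (4*m) =>
            i.val < 2*m ∧ (((Equiv.swap j k).trans π) i).val < 2*m)
            = (Finset.univ.filter fun i : Fin (4*m) =>
                i.val < 2*m ∧ (π i).val < 2*m).erase j := by
          ext i
          simp only [Finset.mem_filter, Finset.mem_erase, Finset.mem_univ, true_and]
          rcases eq_or_ne i j with rfl | hij
          · simp only [hσj]
            constructor
            · rintro ⟨-, h⟩; exact absurd h hk2
            · rintro ⟨h, -⟩; exact absurd rfl h
          · rcases eq_or_ne i k with rfl | hik
            · simp only [hσk]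
              constructor
              · rintro ⟨h, -⟩; exact absurd h hk1
              · rintro ⟨-, h, -⟩; exact absurd h hk1
            · rw [show ((Equiv.swap j k).trans π) i = π i by
                simp [Equiv.trans_apply, Equiv.swap_apply_of_ne_of_ne hij hik]]
              constructor
              · rintro ⟨h1, h2⟩; exact ⟨hij, h1, h2⟩
              · rintro ⟨-, h1, h2⟩; exact ⟨h1, h2⟩
        have hj_mem : j ∈ Finset.univ.filter fun i : Fin (4*m) =>
            i.val < 2*m ∧ (π i).val < 2*m := by
          simp only [Finset.mem_filter, Finset.mem_univ, true_and]
          exact ⟨hj1, hj2⟩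
        show XC m ((Equiv.swap j k).trans π) + 1 = m
        unfold XC
        rw [hset, Finset.card_erase_of_mem hj_mem]
        have : (Finset.univ.filter fun i : Fin (4*m) =>
            i.val < 2*m ∧ (π i).val < 2*m).card = m := hπ
        omega
      · rintro ⟨π1, j1, k1⟩ - ⟨π2, j2, k2⟩ - heq
        have hσ := congrArg Sigma.fst heq
        have hp' : ((j1, k1) : Fin (4*m) × Fin (4*m)) = (j2, k2) :=
          congrArg Sigma.snd heq
        have hj : j1 = j2 := congrArg Prod.fst hp'
        have hk : k1 = k2 := congrArg Prod.snd hp'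
        subst hj; subst hk
        simp only at hσ
        have hπ : π1 = π2 := by
          ext x
          have h := Equiv.ext_iff.mp hσ ((Equiv.swap j1 k1) x)
          simp only [Equiv.trans_apply, Equiv.swap_apply_self] at h
          exact congrArg Fin.val h
        simp [hπ]
    have hsub : (Finset.univ.filter fun π : Equiv.Perm (Fin (4*m)) => XC m π + 1 = m).card
        ≤ (Finset.univ.filter fun π : Equiv.Perm (Fin (4*m)) => XC m π < m).card := by
      apply Finset.card_le_card
      intro π hπ
      simp only [Finset.mem_filter, Finset.mem_univ, true_and] at hπ ⊢
      omega
    have hmm : (m+1) * (m+1) ≤ 4 * (m * m) := by nlinarith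
    have hchain : (Finset.univ.filter fun π : Equiv.Perm (Fin (4*m)) => XC m π = m).card * (m*m)
        ≤ (4 * (Finset.univ.filter fun π : Equiv.Perm (Fin (4*m)) => XC m π < m).card) * (m*m) := by
      calc (Finset.univ.filter fun π : Equiv.Perm (Fin (4*m)) => XC m π = m).card * (m*m)
          = Sm.card := hSmcard.symm
        _ ≤ Sm'.card := hinj
        _ = (Finset.univ.filter fun π : Equiv.Perm (Fin (4*m)) => XC m π + 1 = m).card
              * ((m+1)*(m+1)) := hSm'card
        _ ≤ (Finset.univ.filter fun π : Equiv.Perm (Fin (4*m)) => XC m π < m).card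
              * (4 * (m*m)) := Nat.mul_le_mul hsub hmm
        _ = (4 * (Finset.univ.filter fun π : Equiv.Perm (Fin (4*m)) => XC m π < m).card) * (m*m) := by
              ring
    exact Nat.le_of_mul_le_mul_right hchain (by positivity)
  -- conclude
  have hfinal : Nat.factorial (4*m)
      ≤ 6 * (Finset.univ.filter fun π : Equiv.Perm (Fin (4*m)) => XC m π < m).card := by
    omega
  have hfac : (0:ℝ) < (Nat.factorial (4*m) : ℝ) := by
    exact_mod_cast Nat.factorial_pos (4*m)
  rw [ge_iff_le, le_div_iff₀ hfac]
  have : ((Nat.factorial (4*m) : ℝ))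
      ≤ 6 * ((Finset.univ.filter fun π : Equiv.Perm (Fin (4*m)) => XC m π < m).card : ℝ) := by
    exact_mod_cast hfinal
  linarith
end

section
/- For every integer n ≥ 2 and every p ∈ [0,1], the expectation of the square root of a Binomial(n, p) random variable satisfies ∑_{k=0}^{n} C(n,k) p^k (1−p)^{n−k} √k ≤ n·p·(1−p)^{n−1}·(1 − √2/2) + n·p·(√2/2). -/
open Finset

theorem stmt_5 (n : ℕ) (hn : 2 ≤ n) (p : ℝ) (hp0 : 0 ≤ p) (hp1 : p ≤ 1) :
    (∑ k ∈ Finset.range (n + 1),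
        (n.choose k : ℝ) * p ^ k * (1 - p) ^ (n - k) * Real.sqrt k)
      ≤ n * p * (1 - p) ^ (n - 1) * (1 - Real.sqrt 2 / 2) + n * p * (Real.sqrt 2 / 2) := by
  have hq : 0 ≤ 1 - p := by linarith
  set s2 : ℝ := Real.sqrt 2 / 2 with hs2
  have hs2sq : Real.sqrt 2 ^ 2 = 2 := Real.sq_sqrt (by norm_num)
  have hs2nn : 0 ≤ Real.sqrt 2 := Real.sqrt_nonneg 2
  set w : ℕ → ℝ := fun k => (n.choose k : ℝ) * p ^ k * (1 - p) ^ (n - k) with hw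
  have hwnn : ∀ k, 0 ≤ w k := fun k => by positivity
  -- pointwise bound on sqrt
  have key : ∀ k : ℕ, Real.sqrt k ≤ (k : ℝ) * s2 + (if k = 1 then (1 - s2) else 0) := by
    intro k
    match k with
    | 0 => simp
    | 1 => simp
    | (m+2) =>
      simp only [if_neg (by omega : ¬ m + 2 = 1), add_zero]
      have hk2 : (2:ℝ) ≤ ((m+2 : ℕ) : ℝ) := by push_cast; linarith [Nat.cast_nonneg (α := ℝ) m]
      have h1 : ((m+2:ℕ):ℝ) ≤ (((m+2:ℕ):ℝ) * s2) ^ 2 := by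
        rw [hs2]
        have : (((m+2:ℕ):ℝ) * (Real.sqrt 2 / 2)) ^ 2 = ((m+2:ℕ):ℝ)^2 * (Real.sqrt 2 ^2) / 4 := by ring
        rw [this, hs2sq]
        nlinarith
      have h2 : 0 ≤ ((m+2:ℕ):ℝ) * s2 := by positivity
      calc Real.sqrt ((m+2:ℕ):ℝ) ≤ Real.sqrt ((((m+2:ℕ):ℝ) * s2) ^ 2) := Real.sqrt_le_sqrt h1
        _ = ((m+2:ℕ):ℝ) * s2 := Real.sqrt_sq h2
  -- binomial theorem: sum of weights over range (m+1) equals 1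
  have hbin : ∀ m : ℕ, ∑ j ∈ range (m+1), (m.choose j : ℝ) * p ^ j * (1-p) ^ (m-j) = 1 := by
    intro m
    calc ∑ j ∈ range (m+1), (m.choose j : ℝ) * p ^ j * (1-p) ^ (m-j)
        = (p + (1-p)) ^ m := by
          rw [add_pow]
          exact Finset.sum_congr rfl (fun j _ => by ring)
      _ = 1 := by norm_num
  -- mean identity
  have hmean : ∑ k ∈ range (n+1), w k * (k : ℝ) = n * p := by
    obtain ⟨m, rfl⟩ : ∃ m, n = m + 1 := ⟨n - 1, by omega⟩
    rw [Finset.sum_range_succ']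
    simp only [Nat.cast_zero, mul_zero, add_zero]
    have hrw : ∀ j ∈ range (m+1), w (j+1) * ((j+1 : ℕ) : ℝ)
        = ((m+1 : ℕ) : ℝ) * p * ((m.choose j : ℝ) * p ^ j * (1-p) ^ (m-j)) := by
      intro j hj
      have hj' : j ≤ m := by
        have := Finset.mem_range.mp hj; omega
      have hc : ((m+1) * m.choose j : ℕ) = ((m+1).choose (j+1) * (j+1) : ℕ) :=
        Nat.add_one_mul_choose_eq m j
      have hc' : ((m+1 : ℕ) : ℝ) * (m.choose j : ℝ) = ((m+1).choose (j+1) : ℝ) * ((j+1:ℕ) : ℝ) := by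
        exact_mod_cast congrArg (Nat.cast : ℕ → ℝ) hc
      have hsub : m + 1 - (j + 1) = m - j := by omega
      simp only [hw, hsub]
      rw [pow_succ]
      push_cast at hc' ⊢
      linear_combination -(p ^ j * p * (1 - p) ^ (m - j)) * hc'
    rw [Finset.sum_congr rfl hrw, ← Finset.mul_sum, hbin m, mul_one]
  -- the if-sum
  have hif : ∑ k ∈ range (n+1), w k * (if k = 1 then (1 - s2) else 0)
      = w 1 * (1 - s2) := by
    rw [Finset.sum_congr rfl (fun k _ => by rw [mul_ite, mul_zero])]
    rw [Finset.sum_ite_eq' (range (n+1)) 1 (fun k => w k * (1 - s2))]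
    rw [if_pos (Finset.mem_range.mpr (by omega))]
  have hw1 : w 1 = (n : ℝ) * p * (1-p) ^ (n-1) := by
    simp [hw, Nat.choose_one_right, pow_one]
  calc (∑ k ∈ range (n + 1), (n.choose k : ℝ) * p ^ k * (1 - p) ^ (n - k) * Real.sqrt k)
      ≤ ∑ k ∈ range (n+1), (w k * ((k : ℝ) * s2) + w k * (if k = 1 then (1 - s2) else 0)) := by
        apply Finset.sum_le_sum
        intro k _
        have := mul_le_mul_of_nonneg_left (key k) (hwnn k)
        calc (n.choose k : ℝ) * p ^ k * (1 - p) ^ (n - k) * Real.sqrt k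
            = w k * Real.sqrt k := rfl
          _ ≤ w k * ((k : ℝ) * s2 + (if k = 1 then (1 - s2) else 0)) := this
          _ = w k * ((k : ℝ) * s2) + w k * (if k = 1 then (1 - s2) else 0) := by ring
    _ = (∑ k ∈ range (n+1), w k * (k:ℝ)) * s2 + ∑ k ∈ range (n+1), w k * (if k = 1 then (1 - s2) else 0) := by
        rw [Finset.sum_add_distrib, Finset.sum_mul]
        congr 1
        exact Finset.sum_congr rfl (fun k _ => by ring)
    _ = (n * p) * s2 + w 1 * (1 - s2) := by rw [hmean, hif]
    _ = n * p * (1 - p) ^ (n - 1) * (1 - s2) + n * p * s2 := by rw [hw1]; ring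
end

section
/- Let γ(x) = √x, λ ≥ 0, d ≥ 2 an integer, and ε = (1+λ)·e^{e^e}. Then (γ(1) − γ(0))·(1 − 1/ε) − (γ(2) − γ(1))·(1 − 1/(d·ε)) + λ·(2^{1 − 1/ε} − 2^{1 − 1/(d·ε)}) ≥ 1/2. -/
set_option maxHeartbeats 1000000

theorem stmt_6 (lam : ℝ) (hlam : 0 ≤ lam) (d : ℕ) (hd : 2 ≤ d)
    (eps : ℝ) (heps : eps = (1 + lam) * Real.exp (Real.exp (Real.exp 1))) :
    (Real.sqrt 1 - Real.sqrt 0) * (1 - 1 / eps)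
      - (Real.sqrt 2 - Real.sqrt 1) * (1 - 1 / (d * eps))
      + lam * ((2 : ℝ) ^ (1 - 1 / eps) - (2 : ℝ) ^ (1 - 1 / ((d : ℝ) * eps)))
      ≥ 1 / 2 := by
  have h27 : (2.7 : ℝ) ≤ Real.exp 1 := by linarith [Real.exp_one_gt_d9]
  have hexppos : (0:ℝ) < Real.exp 1 := Real.exp_pos 1
  have h2 : (4 : ℝ) ≤ Real.exp (Real.exp 1) := by
    have h1 : Real.exp 2 ≤ Real.exp (Real.exp 1) := Real.exp_le_exp.mpr (by linarith)
    have h22 : Real.exp 2 = Real.exp 1 * Real.exp 1 := by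
      rw [← Real.exp_add]; norm_num
    nlinarith
  set E := Real.exp (Real.exp (Real.exp 1)) with hE_def
  have hE : (53 : ℝ) ≤ E := by
    have h4 : Real.exp 4 ≤ E := Real.exp_le_exp.mpr h2
    have h44 : Real.exp 4 = Real.exp 1 * Real.exp 1 * (Real.exp 1 * Real.exp 1) := by
      rw [show (4:ℝ) = 1 + 1 + (1 + 1) by norm_num, Real.exp_add, Real.exp_add]
    have hsq : (7.29 : ℝ) ≤ Real.exp 1 * Real.exp 1 := by nlinarith
    nlinarith
  clear_value E
  clear hE_def h2 h27 hexppos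
  have hEpos : (0:ℝ) < E := by linarith
  have hepsE : E ≤ eps := by rw [heps]; nlinarith
  have heppos : (0:ℝ) < eps := by linarith
  have hd2 : (2:ℝ) ≤ (d:ℝ) := by exact_mod_cast hd
  have hdpos : (0:ℝ) < (d:ℝ) := by linarith
  have hdepos : (0:ℝ) < (d:ℝ) * eps := by positivity
  -- key convexity bound : 2^δ ≤ 1 + δ for δ ∈ [0,1]
  have key : ∀ δ : ℝ, 0 ≤ δ → δ ≤ 1 → (2:ℝ) ^ δ ≤ 1 + δ := by
    intro δ h0 h1
    have h := convexOn_exp.2 (Set.mem_univ (0:ℝ)) (Set.mem_univ (Real.log 2))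
      (by linarith : (0:ℝ) ≤ 1 - δ) h0 (by ring)
    simp only [smul_eq_mul, mul_zero, zero_add, Real.exp_zero,
      Real.exp_log two_pos] at h
    rw [Real.rpow_def_of_pos (by norm_num : (0:ℝ) < 2)]
    calc Real.exp (Real.log 2 * δ) = Real.exp (δ * Real.log 2) := by ring_nf
      _ ≤ (1 - δ) * 1 + δ * 2 := h
      _ = 1 + δ := by ring
  set a := 1 - 1 / eps with ha_def
  set b := 1 - 1 / ((d:ℝ) * eps) with hb_def
  have hde_inv_pos : (0:ℝ) < 1 / ((d:ℝ) * eps) := by positivity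
  have he_inv_pos : (0:ℝ) < 1 / eps := by positivity
  have hmono : 1 / ((d:ℝ) * eps) ≤ 1 / eps := by
    apply one_div_le_one_div_of_le heppos; nlinarith
  have hde_inv_le : 1 / ((d:ℝ) * eps) ≤ 1 := by rw [div_le_one hdepos]; nlinarith
  have hinvE : 1 / eps ≤ 1 / E := one_div_le_one_div_of_le hEpos hepsE
  have hinv53 : 1 / eps ≤ 1 / 53 :=
    le_trans hinvE (one_div_le_one_div_of_le (by norm_num) hE)
  clear_value a b
  have hba0 : 0 ≤ b - a := by rw [ha_def, hb_def]; linarith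
  have hba1 : b - a ≤ 1 / eps := by rw [ha_def, hb_def]; linarith
  -- bound the lambda term
  have h2a : (2:ℝ) ^ a ≤ 2 := by
    have h := Real.rpow_le_rpow_of_exponent_le (one_le_two)
      (show a ≤ 1 by rw [ha_def]; linarith)
    simpa using h
  have h2apos : (0:ℝ) < (2:ℝ) ^ a := Real.rpow_pos_of_pos (by norm_num) a
  have hsplit : (2:ℝ) ^ b = (2:ℝ) ^ a * (2:ℝ) ^ (b - a) := by
    rw [← Real.rpow_add (by norm_num : (0:ℝ) < 2)]; ring_nf
  have h2ba : (2:ℝ) ^ (b - a) ≤ 1 + (b - a) := key _ hba0 (by linarith)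
  have h2ba0 : (1:ℝ) ≤ (2:ℝ) ^ (b - a) := by
    have h := Real.rpow_le_rpow_of_exponent_le (one_le_two) hba0
    simpa using h
  have habdiff : (2:ℝ) ^ a - (2:ℝ) ^ b ≥ -(2 * (b - a)) := by
    rw [hsplit]; nlinarith
  have hlamterm : lam * ((2:ℝ) ^ a - (2:ℝ) ^ b) ≥ -(2 * (1 / E)) := by
    have h1 : lam * ((2:ℝ) ^ a - (2:ℝ) ^ b) ≥ lam * (-(2 * (b - a))) :=
      mul_le_mul_of_nonneg_left habdiff hlam
    have h2' : lam * (b - a) ≤ lam * (1 / eps) := mul_le_mul_of_nonneg_left hba1 hlam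
    have h3 : lam * (1 / eps) ≤ 1 / E := by
      rw [show lam * (1/eps) = lam / eps by ring, div_le_div_iff₀ heppos hEpos, heps]
      nlinarith [mul_nonneg hlam hEpos.le]
    linarith
  -- bound the main term
  have hsqrt2ub : Real.sqrt 2 ≤ 1.415 := by
    rw [show (1.415:ℝ) = Real.sqrt (1.415 ^ 2) from (Real.sqrt_sq (by norm_num)).symm]
    exact Real.sqrt_le_sqrt (by norm_num)
  have hsqrt2lb : (1:ℝ) ≤ Real.sqrt 2 := by
    rw [show (1:ℝ) = Real.sqrt 1 from Real.sqrt_one.symm]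
    exact Real.sqrt_le_sqrt (by norm_num)
  have hb0 : 0 ≤ b := by rw [hb_def]; linarith
  have hb1 : b ≤ 1 := by rw [hb_def]; linarith
  have ha_lb : 1 - 1/53 ≤ a := by rw [ha_def]; linarith
  rw [Real.sqrt_one, Real.sqrt_zero]
  have h2' : (Real.sqrt 2 - 1) * b ≤ 0.415 := by nlinarith
  have hEub : 1 / E ≤ 1 / 53 := one_div_le_one_div_of_le (by norm_num) hE
  linarith
end

section
/- For all real λ ≥ 0, the quantity λ·(2^{1 − 1/((1+λ)·e^{e^e})} − 2) is greater than or equal to −e^{−e^e}·log(4), and hence greater than or equal to −0.01. -/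
theorem stmt_7 (lam : ℝ) (hlam : 0 ≤ lam) :
    lam * ((2 : ℝ) ^ (1 - 1 / ((1 + lam) * Real.exp (Real.exp (Real.exp 1)))) - 2)
        ≥ -Real.exp (-(Real.exp (Real.exp 1))) * Real.log 4
    ∧ lam * ((2 : ℝ) ^ (1 - 1 / ((1 + lam) * Real.exp (Real.exp (Real.exp 1)))) - 2)
        ≥ -0.01 := by
  set E := Real.exp (Real.exp (Real.exp 1)) with hEdef
  have hE : 0 < E := Real.exp_pos _
  have h1l : (0:ℝ) < 1 + lam := by linarith
  set x := 1 / ((1 + lam) * E) with hxdef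
  have hx : 0 < x := by positivity
  have hlog2 : 0 < Real.log 2 := Real.log_pos (by norm_num)
  have h2 : (2:ℝ) ^ (1 - x) = 2 * Real.exp (-(x * Real.log 2)) := by
    rw [Real.rpow_def_of_pos (by norm_num : (0:ℝ) < 2),
      show Real.log 2 * (1 - x) = Real.log 2 + (-(x * Real.log 2)) by ring,
      Real.exp_add, Real.exp_log (by norm_num : (0:ℝ) < 2)]
  have key : Real.exp (-(x * Real.log 2)) - 1 ≥ -(x * Real.log 2) := by
    linarith [Real.add_one_le_exp (-(x * Real.log 2))]
  have hxE : (1 + lam) * x = 1 / E := by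
    rw [hxdef]; field_simp
  have hlx : lam * x ≤ 1 / E := by nlinarith
  have hlog4 : Real.log 4 = 2 * Real.log 2 := by
    rw [show (4:ℝ) = 2 ^ (2:ℕ) by norm_num, Real.log_pow]; push_cast; ring
  have hexpneg : Real.exp (-(Real.exp (Real.exp 1))) = 1 / E := by
    rw [Real.exp_neg, hEdef, one_div]
  -- main inequality
  have main : lam * ((2:ℝ) ^ (1 - x) - 2) ≥ -(1/E) * (2 * Real.log 2) := by
    rw [h2]
    have h3 : lam * (2 * Real.exp (-(x * Real.log 2)) - 2)
        ≥ lam * (2 * (-(x * Real.log 2))) := by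
      apply mul_le_mul_of_nonneg_left _ hlam
      nlinarith
    have h4 : lam * (2 * (-(x * Real.log 2))) = -(2 * Real.log 2) * (lam * x) := by ring
    have h5 : -(2 * Real.log 2) * (lam * x) ≥ -(2 * Real.log 2) * (1/E) := by
      have := mul_le_mul_of_nonneg_left hlx (le_of_lt (by positivity : (0:ℝ) < 2 * Real.log 2))
      nlinarith
    nlinarith
  have first : lam * ((2:ℝ) ^ (1 - x) - 2)
      ≥ -Real.exp (-(Real.exp (Real.exp 1))) * Real.log 4 := by
    rw [hexpneg, hlog4]; linarith
  refine ⟨first, ?_⟩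
  -- second: need -(1/E) * (2 log 2) ≥ -0.01, i.e. 2 log 2 ≤ 0.01 E
  have he1 : (2.7182818283:ℝ) < Real.exp 1 := Real.exp_one_gt_d9
  have h7 : (7:ℝ) ≤ Real.exp (Real.exp 1) := by
    have h2le : (2:ℝ) ≤ Real.exp 1 := by linarith
    have : Real.exp 2 ≤ Real.exp (Real.exp 1) := Real.exp_le_exp.mpr h2le
    have he2 : Real.exp 2 = Real.exp 1 * Real.exp 1 := by
      rw [show (2:ℝ) = 1 + 1 by ring, Real.exp_add]
    nlinarith
  have hE7 : Real.exp 7 ≤ E := Real.exp_le_exp.mpr h7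
  have hexp7 : ((2.7:ℝ))^(7:ℕ) ≤ Real.exp 7 := by
    have : Real.exp 7 = Real.exp 1 ^ (7:ℕ) := by
      rw [← Real.exp_nat_mul]; norm_num
    rw [this]
    exact pow_le_pow_left₀ (by norm_num) (by linarith) 7
  have hE139 : (139:ℝ) ≤ E := by
    have : (139:ℝ) ≤ (2.7:ℝ)^(7:ℕ) := by norm_num
    linarith
  have hlog2u : Real.log 2 < 0.6931471808 := Real.log_two_lt_d9
  have hsecond : -(1/E) * (2 * Real.log 2) ≥ -0.01 := by
    have h : (1/E) * (2 * Real.log 2) ≤ 0.01 := by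
      rw [div_mul_eq_mul_div, one_mul, div_le_iff₀ hE]
      nlinarith
    linarith
  linarith
end

section
/- For integers m ≥ 2 and q ≥ 2, with g(x) = 1/log₂(x+1), we have g(q) − g(mq − m − ⌊mq/4⌋ + 2) ≥ (2/5) · (1/log₂²(mq)). -/
theorem stmt_8 (m q : ℕ) (hm : 2 ≤ m) (hq : 2 ≤ q) :
    1 / Real.logb 2 ((q : ℝ) + 1)
      - 1 / Real.logb 2 (((m * q - m - m * q / 4 + 2 : ℕ) : ℝ) + 1)
      ≥ (2 / 5) * (1 / (Real.logb 2 ((m : ℝ) * q)) ^ 2) := by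
  -- Nonlinear nat facts, then omega
  have key1 : 2 * m + 2 * q ≤ m * q + 4 := by nlinarith
  have key2 : 2 * q ≤ m * q := Nat.mul_le_mul_right q hm
  have key3 : 2 * m ≤ m * q := by
    calc 2 * m = m * 2 := by ring
    _ ≤ m * q := Nat.mul_le_mul_left m hq
  generalize hNdef : m * q - m - m * q / 4 + 2 = N
  have hN1 : 4 * (q + 1) ≤ 3 * (N + 1) := by omega
  have hN2 : N + 1 ≤ m * q := by omega
  have hq1 : q + 1 ≤ m * q := by omega
  -- Real setup
  have hq3 : (3 : ℝ) ≤ (q : ℝ) + 1 := by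
    have : (2 : ℝ) ≤ (q : ℝ) := by exact_mod_cast hq
    linarith
  have hNr : ((4 : ℝ) / 3) * ((q : ℝ) + 1) ≤ (N : ℝ) + 1 := by
    have h := (Nat.cast_le (α := ℝ)).mpr hN1
    push_cast at h
    linarith
  have hNle : (N : ℝ) + 1 ≤ (m : ℝ) * q := by exact_mod_cast hN2
  have hqle : (q : ℝ) + 1 ≤ (m : ℝ) * q := by exact_mod_cast hq1
  set a := Real.logb 2 ((q : ℝ) + 1) with hadef
  set b := Real.logb 2 ((N : ℝ) + 1) with hbdef
  set c := Real.logb 2 ((m : ℝ) * q) with hcdef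
  have h2 : (1 : ℝ) < 2 := one_lt_two
  have ha : 1 ≤ a := by
    have h := Real.logb_le_logb_of_le h2 (by norm_num : (0:ℝ) < 2) (by linarith : (2:ℝ) ≤ (q:ℝ) + 1)
    rwa [Real.logb_self_eq_one h2] at h
  have hb : 1 ≤ b := by
    have h := Real.logb_le_logb_of_le h2 (by norm_num : (0:ℝ) < 2) (by linarith : (2:ℝ) ≤ (N:ℝ) + 1)
    rwa [Real.logb_self_eq_one h2] at h
  have hac : a ≤ c := Real.logb_le_logb_of_le h2 (by linarith) hqle
  have hbc : b ≤ c := Real.logb_le_logb_of_le h2 (by linarith) hNle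
  have h4 : (2 : ℝ) / 5 ≤ Real.logb 2 (4 / 3) := by
    rw [Real.le_logb_iff_rpow_le h2 (by norm_num)]
    have h5 : ((2 : ℝ) ^ ((2 : ℝ) / 5)) ^ (5 : ℕ) = 4 := by
      rw [← Real.rpow_natCast ((2 : ℝ) ^ ((2 : ℝ) / 5)), ← Real.rpow_mul (by norm_num)]
      norm_num
    refine le_of_pow_le_pow_left₀ (n := 5) (by norm_num) (by norm_num) ?_
    rw [h5]; norm_num
  have hdiff : 2 / 5 ≤ b - a := by
    have hlog : Real.logb 2 (4 / 3 * ((q : ℝ) + 1)) ≤ b :=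
      Real.logb_le_logb_of_le h2 (by linarith) (by linarith)
    rw [Real.logb_mul (by norm_num) (by linarith)] at hlog
    linarith
  -- final arithmetic
  have hapos : 0 < a := by linarith
  have hbpos : 0 < b := by linarith
  have hcpos : 0 < c := by linarith
  have habpos : 0 < a * b := mul_pos hapos hbpos
  have habc : a * b ≤ c ^ 2 := by nlinarith
  have e1 : 1 / a - 1 / b = (b - a) / (a * b) := by
    field_simp
  rw [ge_iff_le, e1]
  calc (2 : ℝ) / 5 * (1 / c ^ 2) ≤ (2 / 5) * (1 / (a * b)) := by
        gcongr
      _ ≤ (b - a) / (a * b) := by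
        rw [div_eq_mul_one_div (b - a) (a * b)]
        gcongr
end

section
/- For all integers m ≥ 2, q ≥ 2 and all real λ ≥ 0 and s ∈ [0.01, 1], with ξ = (1+λ)^{−1}·e^{−e·mq}, we have λ·q·(2^{s−ξ} − 2^{s}) ≥ −q·e^{−e·mq}·log(4). -/
theorem stmt_16 (m q : ℕ) (hm : 2 ≤ m) (hq : 2 ≤ q)
    (lam : ℝ) (hlam : 0 ≤ lam) (s : ℝ) (hs1 : 0.01 ≤ s) (hs2 : s ≤ 1)
    (xi : ℝ) (hxi : xi = (1 + lam)⁻¹ * Real.exp (-(Real.exp 1 * ((m : ℝ) * q)))) :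
    lam * (q : ℝ) * ((2 : ℝ) ^ (s - xi) - (2 : ℝ) ^ (s : ℝ))
      ≥ -(q : ℝ) * Real.exp (-(Real.exp 1 * ((m : ℝ) * q))) * Real.log 4 := by
  set E := Real.exp (-(Real.exp 1 * ((m : ℝ) * q))) with hE
  have hEpos : 0 < E := Real.exp_pos _
  have h1lam : 0 < 1 + lam := by linarith
  have hxi0 : 0 ≤ xi := by
    rw [hxi]
    positivity
  have hlog2 : 0 < Real.log 2 := Real.log_pos (by norm_num)
  -- lam * xi ≤ E
  have hkey : lam * xi ≤ E := by
    rw [hxi, show lam * ((1 + lam)⁻¹ * E) = lam * (1 + lam)⁻¹ * E by ring]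
    have h2 : lam * (1 + lam)⁻¹ ≤ 1 := by
      rw [← div_eq_mul_inv]
      exact div_le_one_of_le₀ (by linarith) h1lam.le
    calc lam * (1 + lam)⁻¹ * E ≤ 1 * E :=
          mul_le_mul_of_nonneg_right h2 hEpos.le
      _ = E := one_mul E
  -- 2^(-xi) ≥ 1 - xi * log 2
  have hexp : 1 - xi * Real.log 2 ≤ (2 : ℝ) ^ (-xi) := by
    rw [Real.rpow_def_of_pos (by norm_num : (0:ℝ) < 2)]
    have := Real.add_one_le_exp (Real.log 2 * (-xi))
    linarith
  have h2s : (2 : ℝ) ^ s ≤ 2 := by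
    calc (2 : ℝ) ^ s ≤ (2 : ℝ) ^ (1 : ℝ) :=
          Real.rpow_le_rpow_of_exponent_le (by norm_num) hs2
      _ = 2 := Real.rpow_one 2
  have h2s0 : 0 < (2 : ℝ) ^ s := Real.rpow_pos_of_pos (by norm_num) s
  have hsplit : (2 : ℝ) ^ (s - xi) = (2 : ℝ) ^ s * (2 : ℝ) ^ (-xi) := by
    rw [← Real.rpow_add (by norm_num : (0:ℝ) < 2)]
    ring_nf
  have hdiff : (2 : ℝ) ^ (s - xi) - (2 : ℝ) ^ s ≥ -(2 * (xi * Real.log 2)) := by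
    rw [hsplit]
    nlinarith [mul_nonneg hxi0 hlog2.le]
  have hcore : lam * ((2 : ℝ) ^ (s - xi) - (2 : ℝ) ^ s) ≥ -E * Real.log 4 := by
    have hlog4 : Real.log 4 = 2 * Real.log 2 := by
      rw [show (4:ℝ) = 2 ^ 2 by norm_num, Real.log_pow]
      push_cast; ring
    have h1 : lam * ((2 : ℝ) ^ (s - xi) - (2 : ℝ) ^ s)
        ≥ lam * (-(2 * (xi * Real.log 2))) := by
      exact mul_le_mul_of_nonneg_left hdiff hlam
    have h2 : lam * (-(2 * (xi * Real.log 2))) = -(2 * Real.log 2) * (lam * xi) := by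
      ring
    have h3 : -(2 * Real.log 2) * (lam * xi) ≥ -(2 * Real.log 2) * E := by
      have : 0 ≤ 2 * Real.log 2 := by positivity
      nlinarith
    rw [hlog4]
    linarith
  have hq0 : (0 : ℝ) ≤ (q : ℝ) := Nat.cast_nonneg q
  nlinarith [mul_le_mul_of_nonneg_left hcore hq0]
end
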